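/- The kernel of d2 equals the K-span of S1 ∪ S2 ∪ S3 ∪ S4 ∪ S5 ∪ S6. -/

import Mathlib

attribute [local instance 100] LieRing.ofAssociativeRing

/-- Index type with four consecutive blocks of sizes `n 0, n 1, n 2, n 3`
(corresponding to the partition `I1 ⊔ I2 ⊔ I3 ⊔ I4` of `{1, …, N}`). -/
abbrev BIdx (n : Fin 4 → ℕ) := Σ a : Fin 4, Fin (n a)

/-- The Lie algebra `𝔲` of strictly block upper triangular matrices. -/
def uLie (n : Fin 4 → ℕ) (K : Type*) [Field K] :
    LieSubalgebra K (Matrix (BIdx n) (BIdx n) K) where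
  carrier := {M | ∀ (a b : Fin 4) (i : Fin (n a)) (j : Fin (n b)), b ≤ a → M ⟨a, i⟩ ⟨b, j⟩ = 0}
  add_mem' := by
    intro x y hx hy a b i j h
    simp [Matrix.add_apply, hx a b i j h, hy a b i j h]
  zero_mem' := by intro a b i j h; simp
  smul_mem' := by
    intro c x hx a b i j h
    simp [Matrix.smul_apply, hx a b i j h]
  lie_mem' := by
    intro x y hx hy a b i j h
    have key : ∀ u v : Matrix (BIdx n) (BIdx n) K,
        (∀ (a b : Fin 4) (i : Fin (n a)) (j : Fin (n b)), b ≤ a → u ⟨a, i⟩ ⟨b, j⟩ = 0) →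
        (∀ (a b : Fin 4) (i : Fin (n a)) (j : Fin (n b)), b ≤ a → v ⟨a, i⟩ ⟨b, j⟩ = 0) →
        (u * v) ⟨a, i⟩ ⟨b, j⟩ = 0 := by
      intro u v hu hv
      rw [Matrix.mul_apply]
      apply Finset.sum_eq_zero
      rintro ⟨c, kk⟩ -
      by_cases hc : c ≤ a
      · rw [hu a c i kk hc, zero_mul]
      · rw [hv c b kk j (h.trans (le_of_not_ge hc)), mul_zero]
    rw [Ring.lie_def, Matrix.sub_apply, key x y hx hy, key y x hy hx, sub_zero]

/-- The type of elements of `𝔲`. -/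
abbrev UU (n : Fin 4 → ℕ) (K : Type*) [Field K] := ↥(uLie n K)

/-- `x ∧ y`, as an element of the second exterior power `⋀[K]^2 𝔲`. -/
noncomputable def wedge {n : Fin 4 → ℕ} {K : Type*} [Field K] (x y : UU n K) :
    ↥(⋀[K]^2 (UU n K)) :=
  ⟨ExteriorAlgebra.ιMulti K 2 ![x, y], ExteriorAlgebra.ιMulti_range K 2 ⟨![x, y], rfl⟩⟩

/-- `x` is supported on the `(a, b)` block. -/
def inBlock {n : Fin 4 → ℕ} {K : Type*} [Field K] (a b : Fin 4) (x : UU n K) : Prop :=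
  ∀ (c d : Fin 4) (i : Fin (n c)) (j : Fin (n d)), ¬(c = a ∧ d = b) →
    (x : Matrix (BIdx n) (BIdx n) K) ⟨c, i⟩ ⟨d, j⟩ = 0

/-- The image of the Chevalley–Eilenberg differential `d3 : Λ³𝔲 → Λ²𝔲`: the span of all
`z ∧ [x,y] + y ∧ [z,x] + x ∧ [y,z]`. -/
noncomputable def Imd3 (n : Fin 4 → ℕ) (K : Type*) [Field K] :
    Submodule K ↥(⋀[K]^2 (UU n K)) :=
  Submodule.span K
    {w | ∃ x y z : UU n K, w = wedge z ⁅x, y⁆ + wedge y ⁅z, x⁆ + wedge x ⁅y, z⁆}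

/-- The matrix unit `e_{x y}` for `x` in block `a`, `y` in block `b`, `a < b`, as an
element of `𝔲`. -/
def eU {n : Fin 4 → ℕ} {K : Type*} [Field K] (a b : Fin 4) (h : a < b)
    (i : Fin (n a)) (j : Fin (n b)) : UU n K :=
  ⟨Matrix.single ⟨a, i⟩ ⟨b, j⟩ 1, by
    intro c d k l hdc
    rw [Matrix.single, Matrix.of_apply, if_neg]
    rintro ⟨h1, h2⟩
    have hac : a = c := congrArg Sigma.fst h1
    have hbd : b = d := congrArg Sigma.fst h2
    rw [← hac, ← hbd] at hdc
    exact absurd hdc (not_le.mpr h)⟩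

variable {n : Fin 4 → ℕ} {K : Type*} [Field K]

/-- The matrix unit `e_{i1 j2}` (blocks `I1 → I2`, i.e. `(0,1)`). -/
def e01 (i : Fin (n 0)) (j : Fin (n 1)) : UU n K := eU 0 1 (by decide) i j

/-- The matrix unit `e_{i1 j3}` (blocks `I1 → I3`, i.e. `(0,2)`). -/
def e02 (i : Fin (n 0)) (j : Fin (n 2)) : UU n K := eU 0 2 (by decide) i j

/-- The matrix unit `e_{i1 j4}` (blocks `I1 → I4`, i.e. `(0,3)`). -/
def e03 (i : Fin (n 0)) (j : Fin (n 3)) : UU n K := eU 0 3 (by decide) i j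

/-- The matrix unit `e_{i2 j3}` (blocks `I2 → I3`, i.e. `(1,2)`). -/
def e12 (i : Fin (n 1)) (j : Fin (n 2)) : UU n K := eU 1 2 (by decide) i j

/-- The matrix unit `e_{i2 j4}` (blocks `I2 → I4`, i.e. `(1,3)`). -/
def e13 (i : Fin (n 1)) (j : Fin (n 3)) : UU n K := eU 1 3 (by decide) i j

/-- The matrix unit `e_{i3 j4}` (blocks `I3 → I4`, i.e. `(2,3)`). -/
def e23 (i : Fin (n 2)) (j : Fin (n 3)) : UU n K := eU 2 3 (by decide) i j

/-- The set of wedges `x ∧ y` with `x` supported on block `(a,b)` and `y` supported on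
block `(c,d)`. -/
noncomputable def wSet (n : Fin 4 → ℕ) (K : Type*) [Field K] (a b c d : Fin 4) :
    Set ↥(⋀[K]^2 (UU n K)) :=
  {w | ∃ x y : UU n K, inBlock a b x ∧ inBlock c d y ∧ w = wedge x y}

/-- The set `S1` (elements (1) of the Lemma). -/
noncomputable def S1 (n : Fin 4 → ℕ) (K : Type*) [Field K] : Set ↥(⋀[K]^2 (UU n K)) :=
  wSet n K 0 1 0 1 ∪ wSet n K 1 2 1 2 ∪ wSet n K 2 3 2 3 ∪ wSet n K 0 2 1 2 ∪
    wSet n K 1 2 1 3 ∪ wSet n K 0 1 0 2 ∪ wSet n K 1 3 2 3 ∪ wSet n K 0 1 2 3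

/-- The set `S2` (elements (2) of the Lemma). -/
noncomputable def S2 (n : Fin 4 → ℕ) (K : Type*) [Field K] : Set ↥(⋀[K]^2 (UU n K)) :=
  {w | ∃ x y : UU n K, inBlock 0 3 x ∧ w = wedge x y} ∪ wSet n K 0 2 0 2 ∪
    wSet n K 1 3 1 3 ∪ wSet n K 0 2 1 3

/-- The set `S3` (elements (3) of the Lemma). -/
noncomputable def S3 (n : Fin 4 → ℕ) (K : Type*) [Field K] : Set ↥(⋀[K]^2 (UU n K)) :=
  {w | ∃ (i : Fin (n 0)) (j k : Fin (n 1)) (l : Fin (n 2)), j ≠ k ∧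
      w = wedge (e01 (K := K) i j) (e12 k l)} ∪
    {w | ∃ (i : Fin (n 1)) (j k : Fin (n 2)) (l : Fin (n 3)), j ≠ k ∧
      w = wedge (e12 (K := K) i j) (e23 k l)}

/-- The set `S4` (elements (4) of the Lemma). -/
noncomputable def S4 (n : Fin 4 → ℕ) (K : Type*) [Field K] : Set ↥(⋀[K]^2 (UU n K)) :=
  {w | ∃ (i : Fin (n 0)) (j k : Fin (n 1)) (l : Fin (n 3)), j ≠ k ∧
      w = wedge (e01 (K := K) i j) (e13 k l)} ∪
    {w | ∃ (i : Fin (n 0)) (j k : Fin (n 2)) (l : Fin (n 3)), j ≠ k ∧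
      w = wedge (e02 (K := K) i j) (e23 k l)}

/-- The set `S5` (elements (5) of the Lemma). -/
noncomputable def S5 (n : Fin 4 → ℕ) (K : Type*) [Field K] : Set ↥(⋀[K]^2 (UU n K)) :=
  {w | ∃ (i : Fin (n 0)) (kk : Fin (n 2)) (α : Fin (n 1) → K), (∑ j, α j) = 0 ∧
      w = ∑ j, α j • wedge (e01 (K := K) i j) (e12 j kk)} ∪
    {w | ∃ (i : Fin (n 1)) (kk : Fin (n 3)) (α : Fin (n 2) → K), (∑ j, α j) = 0 ∧
      w = ∑ j, α j • wedge (e12 (K := K) i j) (e23 j kk)}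

/-- The set `S6` (elements (6) of the Lemma). -/
noncomputable def S6 (n : Fin 4 → ℕ) (K : Type*) [Field K] : Set ↥(⋀[K]^2 (UU n K)) :=
  {w | ∃ (i : Fin (n 0)) (kk : Fin (n 3)) (α : Fin (n 1) → K) (β : Fin (n 2) → K),
    (∑ j, α j) + (∑ j, β j) = 0 ∧
    w = (∑ j, α j • wedge (e01 (K := K) i j) (e13 j kk)) +
      ∑ j, β j • wedge (e02 (K := K) i j) (e23 j kk)}

set_option synthInstance.maxHeartbeats 1000000
set_option maxHeartbeats 1000000

section AuxBasic
variable {n : Fin 4 → ℕ} {K : Type*} [Field K]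

lemma wedge_coe (x y : UU n K) :
    (wedge x y : ExteriorAlgebra K (UU n K)) =
      ExteriorAlgebra.ι K x * ExteriorAlgebra.ι K y := by
  show ExteriorAlgebra.ιMulti K 2 ![x, y] = _
  rw [ExteriorAlgebra.ιMulti_apply]
  simp [List.ofFn_succ]

lemma wedge_add_left (x x' y : UU n K) :
    wedge (x + x') y = wedge x y + wedge x' y :=
  Subtype.ext (by simp [wedge_coe, add_mul])

lemma wedge_add_right (x y y' : UU n K) :
    wedge x (y + y') = wedge x y + wedge x y' :=
  Subtype.ext (by simp [wedge_coe, mul_add])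

lemma wedge_smul_left (c : K) (x y : UU n K) :
    wedge (c • x) y = c • wedge x y :=
  Subtype.ext (by simp [wedge_coe, smul_mul_assoc])

lemma wedge_smul_right (c : K) (x y : UU n K) :
    wedge x (c • y) = c • wedge x y :=
  Subtype.ext (by simp [wedge_coe, mul_smul_comm])

lemma wedge_zero_left (y : UU n K) : wedge (0 : UU n K) y = 0 :=
  Subtype.ext (by simp [wedge_coe])

lemma wedge_zero_right (x : UU n K) : wedge x (0 : UU n K) = 0 :=
  Subtype.ext (by simp [wedge_coe])

lemma wedge_swap (x y : UU n K) : wedge y x = - wedge x y :=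
  Subtype.ext (by
    simp only [wedge_coe, Submodule.coe_neg]
    exact eq_neg_of_add_eq_zero_left (ExteriorAlgebra.ι_add_mul_swap y x))

end AuxBasic
section AuxMatrix
variable {n : Fin 4 → ℕ} {K : Type*} [Field K]

lemma uLie_coe_bracket (x y : UU n K) :
    ((⁅x, y⁆ : UU n K) : Matrix (BIdx n) (BIdx n) K) =
      (x : Matrix (BIdx n) (BIdx n) K) * (y : Matrix (BIdx n) (BIdx n) K) -
      (y : Matrix (BIdx n) (BIdx n) K) * (x : Matrix (BIdx n) (BIdx n) K) := by
  rw [LieSubalgebra.coe_bracket, Ring.lie_def]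

lemma mul_eq_zero_of_blocks {a b c d : Fin 4} {x y : UU n K}
    (hx : inBlock a b x) (hy : inBlock c d y) (hbc : b ≠ c) :
    (x : Matrix (BIdx n) (BIdx n) K) * (y : Matrix (BIdx n) (BIdx n) K) = 0 := by
  ext p r
  rw [Matrix.mul_apply, Matrix.zero_apply]
  apply Finset.sum_eq_zero
  rintro ⟨qa, qi⟩ -
  by_cases hq : qa = b
  · rw [hy qa r.1 qi r.2 (by rintro ⟨h1, -⟩; exact hbc (hq ▸ h1)), mul_zero]
  · rw [hx p.1 qa p.2 qi (by rintro ⟨-, h2⟩; exact hq h2), zero_mul]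

lemma bracket_eq_zero_of_blocks {a b c d : Fin 4} {x y : UU n K}
    (hx : inBlock a b x) (hy : inBlock c d y) (hbc : b ≠ c) (hda : d ≠ a) :
    (⁅x, y⁆ : UU n K) = 0 :=
  Subtype.ext (by
    rw [uLie_coe_bracket, mul_eq_zero_of_blocks hx hy hbc,
      mul_eq_zero_of_blocks hy hx hda, sub_zero, ZeroMemClass.coe_zero])

lemma bracket_eq_zero_of_block03 {x : UU n K} (hx : inBlock 0 3 x) (y : UU n K) :
    (⁅x, y⁆ : UU n K) = 0 := by
  apply Subtype.ext
  rw [uLie_coe_bracket]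
  have h1 : (x : Matrix (BIdx n) (BIdx n) K) * (y : Matrix (BIdx n) (BIdx n) K) = 0 := by
    ext p r
    rw [Matrix.mul_apply, Matrix.zero_apply]
    apply Finset.sum_eq_zero
    rintro ⟨qa, qi⟩ -
    by_cases hq : qa = 3
    · subst hq
      rw [y.2 3 r.1 qi r.2 (by omega), mul_zero]
    · rw [hx p.1 qa p.2 qi (by rintro ⟨-, h2⟩; exact hq h2), zero_mul]
  have h2 : (y : Matrix (BIdx n) (BIdx n) K) * (x : Matrix (BIdx n) (BIdx n) K) = 0 := by
    ext p r
    rw [Matrix.mul_apply, Matrix.zero_apply]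
    apply Finset.sum_eq_zero
    rintro ⟨qa, qi⟩ -
    by_cases hq : qa = 0
    · subst hq
      rw [y.2 p.1 0 p.2 qi (by omega), zero_mul]
    · rw [hx qa r.1 qi r.2 (by rintro ⟨h1, -⟩; exact hq h1), mul_zero]
  rw [h1, h2, sub_zero, ZeroMemClass.coe_zero]

lemma bidx_ne {a b : Fin 4} (h : a ≠ b) {i : Fin (n a)} {j : Fin (n b)} :
    (⟨a, i⟩ : BIdx n) ≠ ⟨b, j⟩ := fun hh => h (congrArg Sigma.fst hh)

lemma stdBr (p q q' r : BIdx n) (hrp : r ≠ p) :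
    Matrix.single p q (1 : K) * Matrix.single q' r 1 -
      Matrix.single q' r 1 * Matrix.single p q 1 =
      if q = q' then Matrix.single p r 1 else 0 := by
  rw [Matrix.single_mul_single_of_ne (c := (1:K)) (i := q') (j := r) (k := p) (h := hrp), sub_zero]
  by_cases h : q = q'
  · subst h; rw [if_pos rfl, Matrix.single_mul_single_same, one_mul]
  · rw [if_neg h, Matrix.single_mul_single_of_ne (c := (1:K)) (i := p) (j := q) (h := h)]

lemma br_01_12 (i : Fin (n 0)) (j k : Fin (n 1)) (l : Fin (n 2)) :
    (⁅(e01 i j : UU n K), e12 k l⁆ : UU n K) = if j = k then e02 i l else 0 := by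
  apply Subtype.ext
  rw [uLie_coe_bracket]
  have hrp : (⟨2, l⟩ : BIdx n) ≠ ⟨0, i⟩ := bidx_ne (by decide)
  have := stdBr (K := K) (⟨0, i⟩ : BIdx n) ⟨1, j⟩ ⟨1, k⟩ ⟨2, l⟩ hrp
  rw [show ((e01 i j : UU n K) : Matrix (BIdx n) (BIdx n) K) =
    Matrix.single ⟨0, i⟩ ⟨1, j⟩ 1 from rfl,
    show ((e12 k l : UU n K) : Matrix (BIdx n) (BIdx n) K) =
    Matrix.single ⟨1, k⟩ ⟨2, l⟩ 1 from rfl, this, apply_ite (Subtype.val)]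
  by_cases h : j = k
  · subst h; rw [if_pos rfl, if_pos rfl]; rfl
  · rw [if_neg (by intro hh; injection hh with h1 h2; exact h h2),
      if_neg h, ZeroMemClass.coe_zero]

end AuxMatrix
section AuxBr
variable {n : Fin 4 → ℕ} {K : Type*} [Field K]

lemma br_12_23 (i : Fin (n 1)) (j k : Fin (n 2)) (l : Fin (n 3)) :
    (⁅(e12 i j : UU n K), e23 k l⁆ : UU n K) = if j = k then e13 i l else 0 := by
  apply Subtype.ext
  rw [uLie_coe_bracket]
  have hrp : (⟨3, l⟩ : BIdx n) ≠ ⟨1, i⟩ := bidx_ne (by decide)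
  have := stdBr (K := K) (⟨1, i⟩ : BIdx n) ⟨2, j⟩ ⟨2, k⟩ ⟨3, l⟩ hrp
  rw [show ((e12 i j : UU n K) : Matrix (BIdx n) (BIdx n) K) =
    Matrix.single ⟨1, i⟩ ⟨2, j⟩ 1 from rfl,
    show ((e23 k l : UU n K) : Matrix (BIdx n) (BIdx n) K) =
    Matrix.single ⟨2, k⟩ ⟨3, l⟩ 1 from rfl, this, apply_ite (Subtype.val)]
  by_cases h : j = k
  · subst h; rw [if_pos rfl, if_pos rfl]; rfl
  · rw [if_neg (by intro hh; injection hh with h1 h2; exact h h2),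
      if_neg h, ZeroMemClass.coe_zero]

lemma br_01_13 (i : Fin (n 0)) (j k : Fin (n 1)) (l : Fin (n 3)) :
    (⁅(e01 i j : UU n K), e13 k l⁆ : UU n K) = if j = k then e03 i l else 0 := by
  apply Subtype.ext
  rw [uLie_coe_bracket]
  have hrp : (⟨3, l⟩ : BIdx n) ≠ ⟨0, i⟩ := bidx_ne (by decide)
  have := stdBr (K := K) (⟨0, i⟩ : BIdx n) ⟨1, j⟩ ⟨1, k⟩ ⟨3, l⟩ hrp
  rw [show ((e01 i j : UU n K) : Matrix (BIdx n) (BIdx n) K) =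
    Matrix.single ⟨0, i⟩ ⟨1, j⟩ 1 from rfl,
    show ((e13 k l : UU n K) : Matrix (BIdx n) (BIdx n) K) =
    Matrix.single ⟨1, k⟩ ⟨3, l⟩ 1 from rfl, this, apply_ite (Subtype.val)]
  by_cases h : j = k
  · subst h; rw [if_pos rfl, if_pos rfl]; rfl
  · rw [if_neg (by intro hh; injection hh with h1 h2; exact h h2),
      if_neg h, ZeroMemClass.coe_zero]

lemma br_02_23 (i : Fin (n 0)) (j k : Fin (n 2)) (l : Fin (n 3)) :
    (⁅(e02 i j : UU n K), e23 k l⁆ : UU n K) = if j = k then e03 i l else 0 := by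
  apply Subtype.ext
  rw [uLie_coe_bracket]
  have hrp : (⟨3, l⟩ : BIdx n) ≠ ⟨0, i⟩ := bidx_ne (by decide)
  have := stdBr (K := K) (⟨0, i⟩ : BIdx n) ⟨2, j⟩ ⟨2, k⟩ ⟨3, l⟩ hrp
  rw [show ((e02 i j : UU n K) : Matrix (BIdx n) (BIdx n) K) =
    Matrix.single ⟨0, i⟩ ⟨2, j⟩ 1 from rfl,
    show ((e23 k l : UU n K) : Matrix (BIdx n) (BIdx n) K) =
    Matrix.single ⟨2, k⟩ ⟨3, l⟩ 1 from rfl, this, apply_ite (Subtype.val)]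
  by_cases h : j = k
  · subst h; rw [if_pos rfl, if_pos rfl]; rfl
  · rw [if_neg (by intro hh; injection hh with h1 h2; exact h h2),
      if_neg h, ZeroMemClass.coe_zero]

lemma inBlock_eU (a b : Fin 4) (h : a < b) (i : Fin (n a)) (j : Fin (n b)) :
    inBlock a b (eU a b h i j : UU n K) := by
  intro c d k l hcd
  show Matrix.single (⟨a, i⟩ : BIdx n) (⟨b, j⟩ : BIdx n) (1:K) (⟨c, k⟩ : BIdx n) (⟨d, l⟩ : BIdx n) = 0
  rw [Matrix.single, Matrix.of_apply, if_neg]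
  rintro ⟨hh1, hh2⟩
  exact hcd ⟨(congrArg Sigma.fst hh1).symm, (congrArg Sigma.fst hh2).symm⟩

end AuxBr
section AuxSpan
variable {n : Fin 4 → ℕ} {K : Type*} [Field K]

noncomputable def eU' (p q : BIdx n) : UU n K :=
  if h : p.1 < q.1 then eU p.1 q.1 h p.2 q.2 else 0

lemma eU'_coe (p q : BIdx n) : ((eU' p q : UU n K) : Matrix (BIdx n) (BIdx n) K) =
    if p.1 < q.1 then Matrix.single p q 1 else 0 := by
  rw [eU', apply_dite (Subtype.val)]
  split
  · rfl
  · rfl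

lemma uu_coe_smul (c : K) (x : UU n K) :
    ((c • x : UU n K) : Matrix (BIdx n) (BIdx n) K) = c • (x : Matrix (BIdx n) (BIdx n) K) := rfl

lemma uu_repr (x : UU n K) :
    x = ∑ p : BIdx n, ∑ q : BIdx n, (x : Matrix (BIdx n) (BIdx n) K) p q • eU' p q := by
  apply Subtype.ext
  simp only [AddSubmonoidClass.coe_finset_sum, uu_coe_smul]
  ext p0 q0
  rw [Matrix.sum_apply]
  have hrow : ∀ p ∈ Finset.univ, p ≠ p0 →
      (∑ q : BIdx n, (x : Matrix (BIdx n) (BIdx n) K) p q •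
        ((eU' p q : UU n K) : Matrix (BIdx n) (BIdx n) K)) p0 q0 = 0 := by
    intro p _ hp
    rw [Matrix.sum_apply]
    apply Finset.sum_eq_zero
    intro q _
    rw [Matrix.smul_apply, eU'_coe]
    split
    · rw [Matrix.single_apply_of_ne _ _ _ _ _ (by tauto), smul_zero]
    · rw [Matrix.zero_apply, smul_zero]
  rw [Finset.sum_eq_single p0 hrow (by simp), Matrix.sum_apply]
  have hcol : ∀ q ∈ Finset.univ, q ≠ q0 →
      ((x : Matrix (BIdx n) (BIdx n) K) p0 q •
        ((eU' p0 q : UU n K) : Matrix (BIdx n) (BIdx n) K)) p0 q0 = 0 := by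
    intro q _ hq
    rw [Matrix.smul_apply, eU'_coe]
    split
    · rw [Matrix.single_apply_of_ne _ _ _ _ _ (by tauto), smul_zero]
    · rw [Matrix.zero_apply, smul_zero]
  rw [Finset.sum_eq_single q0 hcol (by simp), Matrix.smul_apply, eU'_coe]
  split
  · rw [Matrix.single_apply_same, smul_eq_mul, mul_one]
  · rw [Matrix.zero_apply, smul_zero]
    exact x.2 p0.1 q0.1 p0.2 q0.2 (by omega)

end AuxSpan
section AuxWedgeSpan
variable {n : Fin 4 → ℕ} {K : Type*} [Field K]

/-- Right-wedging as a linear map. -/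
noncomputable def wedgeR (y : UU n K) : UU n K →ₗ[K] ↥(⋀[K]^2 (UU n K)) where
  toFun x := wedge x y
  map_add' a b := wedge_add_left a b y
  map_smul' c a := wedge_smul_left c a y

/-- Left-wedging as a linear map. -/
noncomputable def wedgeLf (x : UU n K) : UU n K →ₗ[K] ↥(⋀[K]^2 (UU n K)) where
  toFun y := wedge x y
  map_add' a b := wedge_add_right x a b
  map_smul' c a := wedge_smul_right c x a

lemma wedgeR_apply (x y : UU n K) : wedgeR y x = wedge x y := rfl
lemma wedgeLf_apply (x y : UU n K) : wedgeLf x y = wedge x y := rfl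

lemma wedge_span_top :
    Submodule.span K {w : ↥(⋀[K]^2 (UU n K)) | ∃ x y : UU n K, w = wedge x y} = ⊤ := by
  apply Submodule.map_injective_of_injective (Submodule.injective_subtype (⋀[K]^2 (UU n K)))
  rw [Submodule.map_span, Submodule.map_top, Submodule.range_subtype]
  have himg : (⋀[K]^2 (UU n K)).subtype ''
      {w : ↥(⋀[K]^2 (UU n K)) | ∃ x y : UU n K, w = wedge x y} =
      Set.range (ExteriorAlgebra.ιMulti K 2 (M := UU n K)) := by
    ext u
    constructor
    · rintro ⟨w, ⟨x, y, rfl⟩, rfl⟩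
      exact ⟨![x, y], rfl⟩
    · rintro ⟨v, rfl⟩
      refine ⟨wedge (v 0) (v 1), ⟨v 0, v 1, rfl⟩, ?_⟩
      show ExteriorAlgebra.ιMulti K 2 ![v 0, v 1] = ExteriorAlgebra.ιMulti K 2 v
      congr 1
      funext i
      fin_cases i <;> rfl
  rw [himg, ExteriorAlgebra.ιMulti_span_fixedDegree]

lemma wedge_mem_P (P : Submodule K ↥(⋀[K]^2 (UU n K)))
    (hP : ∀ p q r s : BIdx n, wedge (eU' p q : UU n K) (eU' r s) ∈ P)
    (x y : UU n K) : wedge x y ∈ P := by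
  have step : ∀ x' : UU n K, (∀ r s : BIdx n, wedge x' (eU' r s) ∈ P) → wedge x' y ∈ P := by
    intro x' hx'
    have hy := uu_repr y
    rw [← wedgeLf_apply, hy, map_sum]
    apply Submodule.sum_mem
    intro r _
    rw [map_sum]
    apply Submodule.sum_mem
    intro s _
    rw [map_smul]
    exact Submodule.smul_mem _ _ (hx' r s)
  have hx := uu_repr x
  rw [← wedgeR_apply, hx, map_sum]
  apply Submodule.sum_mem
  intro p _
  rw [map_sum]
  apply Submodule.sum_mem
  intro q _
  rw [map_smul]
  exact Submodule.smul_mem _ _ (step (eU' p q) (fun r s => hP p q r s))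

end AuxWedgeSpan
section AuxW
variable {n : Fin 4 → ℕ} {K : Type*} [Field K]

/-- Index type for the complement `W`. -/
abbrev WIdx (n : Fin 4 → ℕ) :=
  (Fin (n 0) × Fin (n 2)) ⊕ (Fin (n 1) × Fin (n 3)) ⊕ (Fin (n 0) × Fin (n 3))

/-- Generators of the complement `W`. -/
noncomputable def fW (n : Fin 4 → ℕ) (K : Type*) [Field K]
    (h1' : 0 < n 1) (h2' : 0 < n 2) : WIdx n → ↥(⋀[K]^2 (UU n K))
  | Sum.inl (i, k) => wedge (e01 i ⟨0, h1'⟩) (e12 ⟨0, h1'⟩ k)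
  | Sum.inr (Sum.inl (i, k)) => wedge (e12 i ⟨0, h2'⟩) (e23 ⟨0, h2'⟩ k)
  | Sum.inr (Sum.inr (i, k)) => wedge (e01 i ⟨0, h1'⟩) (e13 ⟨0, h1'⟩ k)

/-- Target matrix units of `d2` on the generators of `W`. -/
noncomputable def uW (n : Fin 4 → ℕ) (K : Type*) [Field K] : WIdx n → UU n K
  | Sum.inl (i, k) => e02 i k
  | Sum.inr (Sum.inl (i, k)) => e13 i k
  | Sum.inr (Sum.inr (i, k)) => e03 i k

noncomputable def Wsub (n : Fin 4 → ℕ) (K : Type*) [Field K]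
    (h1' : 0 < n 1) (h2' : 0 < n 2) : Submodule K ↥(⋀[K]^2 (UU n K)) :=
  Submodule.span K (Set.range (fW n K h1' h2'))

noncomputable def SpanS (n : Fin 4 → ℕ) (K : Type*) [Field K] :
    Submodule K ↥(⋀[K]^2 (UU n K)) :=
  Submodule.span K (S1 n K ∪ S2 n K ∪ S3 n K ∪ S4 n K ∪ S5 n K ∪ S6 n K)

lemma memS1 {w : ↥(⋀[K]^2 (UU n K))} (h : w ∈ S1 n K) : w ∈ SpanS n K :=
  Submodule.subset_span (Set.mem_union_left _ (Set.mem_union_left _ (Set.mem_union_left _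
    (Set.mem_union_left _ (Set.mem_union_left _ h)))))

lemma memS2 {w : ↥(⋀[K]^2 (UU n K))} (h : w ∈ S2 n K) : w ∈ SpanS n K :=
  Submodule.subset_span (Set.mem_union_left _ (Set.mem_union_left _ (Set.mem_union_left _
    (Set.mem_union_left _ (Set.mem_union_right _ h)))))

lemma memS3 {w : ↥(⋀[K]^2 (UU n K))} (h : w ∈ S3 n K) : w ∈ SpanS n K :=
  Submodule.subset_span (Set.mem_union_left _ (Set.mem_union_left _ (Set.mem_union_left _
    (Set.mem_union_right _ h))))

lemma memS4 {w : ↥(⋀[K]^2 (UU n K))} (h : w ∈ S4 n K) : w ∈ SpanS n K :=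
  Submodule.subset_span (Set.mem_union_left _ (Set.mem_union_left _ (Set.mem_union_right _ h)))

lemma memS5 {w : ↥(⋀[K]^2 (UU n K))} (h : w ∈ S5 n K) : w ∈ SpanS n K :=
  Submodule.subset_span (Set.mem_union_left _ (Set.mem_union_right _ h))

lemma memS6 {w : ↥(⋀[K]^2 (UU n K))} (h : w ∈ S6 n K) : w ∈ SpanS n K :=
  Submodule.subset_span (Set.mem_union_right _ h)

lemma wSet_mem (a b c d : Fin 4) (hab : a < b) (hcd : c < d)
    (i : Fin (n a)) (j : Fin (n b)) (k : Fin (n c)) (l : Fin (n d)) :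
    wedge (eU a b hab i j : UU n K) (eU c d hcd k l) ∈ wSet n K a b c d :=
  ⟨_, _, inBlock_eU a b hab i j, inBlock_eU c d hcd k l, rfl⟩

lemma swap_mem {P : Submodule K ↥(⋀[K]^2 (UU n K))} {x y : UU n K}
    (h : wedge x y ∈ P) : wedge y x ∈ P := by
  rw [wedge_swap]; exact P.neg_mem h

lemma sum_ind_smul {ι : Type*} [Fintype ι] [DecidableEq ι] (j : ι)
    (w : ι → ↥(⋀[K]^2 (UU n K))) :
    (∑ m, (if m = j then (1 : K) else 0) • w m) = w j := by
  simp [ite_smul]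

end AuxW
section AuxCases
variable {n : Fin 4 → ℕ} {K : Type*} [Field K]

lemma caseA (h1' : 0 < n 1) (h2' : 0 < n 2) (i : Fin (n 0)) (j k : Fin (n 1)) (l : Fin (n 2)) :
    wedge (e01 i j : UU n K) (e12 k l) ∈ SpanS n K ⊔ Wsub n K h1' h2' := by
  by_cases hjk : j = k
  · subst hjk
    have hW : wedge (e01 i ⟨0, h1'⟩ : UU n K) (e12 ⟨0, h1'⟩ l) ∈ Wsub n K h1' h2' :=
      Submodule.subset_span ⟨Sum.inl (i, l), rfl⟩
    have hS : wedge (e01 i j : UU n K) (e12 j l) -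
        wedge (e01 i ⟨0, h1'⟩) (e12 ⟨0, h1'⟩ l) ∈ S5 n K := by
      apply Set.mem_union_left
      refine ⟨i, l, fun m => (if m = j then 1 else 0) - (if m = ⟨0, h1'⟩ then 1 else 0),
        by simp, ?_⟩
      simp only [sub_smul (M := ↥(⋀[K]^2 (UU n K))), Finset.sum_sub_distrib, sum_ind_smul]
    have := Submodule.add_mem _ (Submodule.mem_sup_left (memS5 hS))
      (Submodule.mem_sup_right hW)
    simpa using this
  · exact Submodule.mem_sup_left (memS3 (Set.mem_union_left _ ⟨i, j, k, l, hjk, rfl⟩))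

lemma caseC (h1' : 0 < n 1) (h2' : 0 < n 2) (i : Fin (n 1)) (j k : Fin (n 2)) (l : Fin (n 3)) :
    wedge (e12 i j : UU n K) (e23 k l) ∈ SpanS n K ⊔ Wsub n K h1' h2' := by
  by_cases hjk : j = k
  · subst hjk
    have hW : wedge (e12 i ⟨0, h2'⟩ : UU n K) (e23 ⟨0, h2'⟩ l) ∈ Wsub n K h1' h2' :=
      Submodule.subset_span ⟨Sum.inr (Sum.inl (i, l)), rfl⟩
    have hS : wedge (e12 i j : UU n K) (e23 j l) -
        wedge (e12 i ⟨0, h2'⟩) (e23 ⟨0, h2'⟩ l) ∈ S5 n K := by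
      apply Set.mem_union_right
      refine ⟨i, l, fun m => (if m = j then 1 else 0) - (if m = ⟨0, h2'⟩ then 1 else 0),
        by simp, ?_⟩
      simp only [sub_smul (M := ↥(⋀[K]^2 (UU n K))), Finset.sum_sub_distrib, sum_ind_smul]
    have := Submodule.add_mem _ (Submodule.mem_sup_left (memS5 hS))
      (Submodule.mem_sup_right hW)
    simpa using this
  · exact Submodule.mem_sup_left (memS3 (Set.mem_union_right _ ⟨i, j, k, l, hjk, rfl⟩))

lemma caseB (h1' : 0 < n 1) (h2' : 0 < n 2) (i : Fin (n 0)) (j k : Fin (n 1)) (l : Fin (n 3)) :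
    wedge (e01 i j : UU n K) (e13 k l) ∈ SpanS n K ⊔ Wsub n K h1' h2' := by
  by_cases hjk : j = k
  · subst hjk
    have hW : wedge (e01 i ⟨0, h1'⟩ : UU n K) (e13 ⟨0, h1'⟩ l) ∈ Wsub n K h1' h2' :=
      Submodule.subset_span ⟨Sum.inr (Sum.inr (i, l)), rfl⟩
    have hS : wedge (e01 i j : UU n K) (e13 j l) -
        wedge (e01 i ⟨0, h1'⟩) (e13 ⟨0, h1'⟩ l) ∈ S6 n K := by
      refine ⟨i, l, fun m => (if m = j then 1 else 0) - (if m = ⟨0, h1'⟩ then 1 else 0),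
        fun _ => 0, by simp, ?_⟩
      simp only [sub_smul (M := ↥(⋀[K]^2 (UU n K))), Finset.sum_sub_distrib, sum_ind_smul]
      simp
    have := Submodule.add_mem _ (Submodule.mem_sup_left (memS6 hS))
      (Submodule.mem_sup_right hW)
    simpa using this
  · exact Submodule.mem_sup_left (memS4 (Set.mem_union_left _ ⟨i, j, k, l, hjk, rfl⟩))

lemma caseD (h1' : 0 < n 1) (h2' : 0 < n 2) (i : Fin (n 0)) (j k : Fin (n 2)) (l : Fin (n 3)) :
    wedge (e02 i j : UU n K) (e23 k l) ∈ SpanS n K ⊔ Wsub n K h1' h2' := by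
  by_cases hjk : j = k
  · subst hjk
    have hW : wedge (e01 i ⟨0, h1'⟩ : UU n K) (e13 ⟨0, h1'⟩ l) ∈ Wsub n K h1' h2' :=
      Submodule.subset_span ⟨Sum.inr (Sum.inr (i, l)), rfl⟩
    have hS : wedge (e02 i j : UU n K) (e23 j l) -
        wedge (e01 i ⟨0, h1'⟩) (e13 ⟨0, h1'⟩ l) ∈ S6 n K := by
      refine ⟨i, l, fun m => -(if m = ⟨0, h1'⟩ then 1 else 0),
        fun m => (if m = j then 1 else 0), by simp, ?_⟩
      simp only [neg_smul (M := ↥(⋀[K]^2 (UU n K))), Finset.sum_neg_distrib, sum_ind_smul, sub_eq_neg_add]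
    have := Submodule.add_mem _ (Submodule.mem_sup_left (memS6 hS))
      (Submodule.mem_sup_right hW)
    simpa using this
  · exact Submodule.mem_sup_left (memS4 (Set.mem_union_right _ ⟨i, j, k, l, hjk, rfl⟩))

end AuxCases
section AuxVanish
variable {n : Fin 4 → ℕ} {K : Type*} [Field K]

lemma d2_vanish (d2 : ↥(⋀[K]^2 (UU n K)) →ₗ[K] UU n K)
    (hd2 : ∀ x y : UU n K, d2 (wedge x y) = -⁅x, y⁆) :
    S1 n K ∪ S2 n K ∪ S3 n K ∪ S4 n K ∪ S5 n K ∪ S6 n K ⊆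
      (LinearMap.ker d2 : Set ↥(⋀[K]^2 (UU n K))) := by
  rintro w hmem
  simp only [SetLike.mem_coe, LinearMap.mem_ker]
  rcases hmem with (((((h|h)|h)|h)|h)|h)
  · -- S1
    rcases h with ((((((h|h)|h)|h)|h)|h)|h)|h <;>
      obtain ⟨x, y, hx, hy, rfl⟩ := h <;>
      rw [hd2, bracket_eq_zero_of_blocks hx hy (by decide) (by decide), neg_zero]
  · -- S2
    rcases h with ((h|h)|h)|h
    · obtain ⟨x, y, hx, rfl⟩ := h
      rw [hd2, bracket_eq_zero_of_block03 hx, neg_zero]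
    all_goals
      obtain ⟨x, y, hx, hy, rfl⟩ := h
      rw [hd2, bracket_eq_zero_of_blocks hx hy (by decide) (by decide), neg_zero]
  · -- S3
    rcases h with h|h
    · obtain ⟨i, j, k, l, hjk, rfl⟩ := h
      rw [hd2, br_01_12, if_neg hjk, neg_zero]
    · obtain ⟨i, j, k, l, hjk, rfl⟩ := h
      rw [hd2, br_12_23, if_neg hjk, neg_zero]
  · -- S4
    rcases h with h|h
    · obtain ⟨i, j, k, l, hjk, rfl⟩ := h
      rw [hd2, br_01_13, if_neg hjk, neg_zero]
    · obtain ⟨i, j, k, l, hjk, rfl⟩ := h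
      rw [hd2, br_02_23, if_neg hjk, neg_zero]
  · -- S5
    rcases h with h|h
    · obtain ⟨i, kk, α, hsum, rfl⟩ := h
      rw [map_sum]
      rw [Finset.sum_congr rfl (fun j _ => by
        rw [map_smul, hd2, br_01_12, if_pos rfl] :
        ∀ j ∈ Finset.univ, d2 (α j • wedge (e01 i j) (e12 j kk)) = α j • -(e02 i kk : UU n K))]
      rw [← Finset.sum_smul, hsum, zero_smul]
    · obtain ⟨i, kk, α, hsum, rfl⟩ := h
      rw [map_sum]
      rw [Finset.sum_congr rfl (fun j _ => by
        rw [map_smul, hd2, br_12_23, if_pos rfl] :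
        ∀ j ∈ Finset.univ, d2 (α j • wedge (e12 i j) (e23 j kk)) = α j • -(e13 i kk : UU n K))]
      rw [← Finset.sum_smul, hsum, zero_smul]
  · -- S6
    obtain ⟨i, kk, α, β, hsum, rfl⟩ := h
    rw [map_add, map_sum, map_sum]
    rw [Finset.sum_congr rfl (fun j _ => by
      rw [map_smul, hd2, br_01_13, if_pos rfl] :
      ∀ j ∈ Finset.univ, d2 (α j • wedge (e01 i j) (e13 j kk)) = α j • -(e03 i kk : UU n K))]
    rw [Finset.sum_congr rfl (fun j _ => by
      rw [map_smul, hd2, br_02_23, if_pos rfl] :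
      ∀ j ∈ Finset.univ, d2 (β j • wedge (e02 i j) (e23 j kk)) = β j • -(e03 i kk : UU n K))]
    rw [← Finset.sum_smul, ← Finset.sum_smul, ← add_smul, hsum, zero_smul]

end AuxVanish
section AuxBig
variable {n : Fin 4 → ℕ} {K : Type*} [Field K]

lemma block_cases : ∀ a b : Fin 4, a < b →
    (a = 0 ∧ b = 1) ∨ (a = 0 ∧ b = 2) ∨ (a = 0 ∧ b = 3) ∨ (a = 1 ∧ b = 2) ∨
    (a = 1 ∧ b = 3) ∨ (a = 2 ∧ b = 3) := by decide

lemma unitWedge_mem (h1' : 0 < n 1) (h2' : 0 < n 2) (a b : Fin 4) (hab : a < b)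
    (i : Fin (n a)) (j : Fin (n b)) (c d : Fin 4) (hcd : c < d)
    (k : Fin (n c)) (l : Fin (n d)) :
    wedge (eU a b hab i j : UU n K) (eU c d hcd k l) ∈ SpanS n K ⊔ Wsub n K h1' h2' := by
  rcases block_cases a b hab with ⟨rfl,rfl⟩|⟨rfl,rfl⟩|⟨rfl,rfl⟩|⟨rfl,rfl⟩|⟨rfl,rfl⟩|⟨rfl,rfl⟩ <;>
    rcases block_cases c d hcd with ⟨rfl,rfl⟩|⟨rfl,rfl⟩|⟨rfl,rfl⟩|⟨rfl,rfl⟩|⟨rfl,rfl⟩|⟨rfl,rfl⟩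
  · -- (01,01)
    exact Submodule.mem_sup_left (memS1 (Set.mem_union_left _ (Set.mem_union_left _ (Set.mem_union_left _ (Set.mem_union_left _ (Set.mem_union_left _ (Set.mem_union_left _ (Set.mem_union_left _ (wSet_mem _ _ _ _ hab hcd i j k l)))))))))
  · -- (01,02)
    exact Submodule.mem_sup_left (memS1 (Set.mem_union_left _ (Set.mem_union_left _ (Set.mem_union_right _ (wSet_mem _ _ _ _ hab hcd i j k l)))))
  · -- (01,03)
    apply swap_mem
    exact Submodule.mem_sup_left (memS2 (Set.mem_union_left _ (Set.mem_union_left _ (Set.mem_union_left _ ⟨_, _, inBlock_eU 0 3 hcd k l, rfl⟩))))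
  · -- (01,12)
    exact caseA h1' h2' i j k l
  · -- (01,13)
    exact caseB h1' h2' i j k l
  · -- (01,23)
    exact Submodule.mem_sup_left (memS1 (Set.mem_union_right _ (wSet_mem _ _ _ _ hab hcd i j k l)))
  · -- (02,01)
    apply swap_mem
    exact Submodule.mem_sup_left (memS1 (Set.mem_union_left _ (Set.mem_union_left _ (Set.mem_union_right _ (wSet_mem _ _ _ _ hcd hab k l i j)))))
  · -- (02,02)
    exact Submodule.mem_sup_left (memS2 (Set.mem_union_left _ (Set.mem_union_left _ (Set.mem_union_right _ (wSet_mem _ _ _ _ hab hcd i j k l)))))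
  · -- (02,03)
    apply swap_mem
    exact Submodule.mem_sup_left (memS2 (Set.mem_union_left _ (Set.mem_union_left _ (Set.mem_union_left _ ⟨_, _, inBlock_eU 0 3 hcd k l, rfl⟩))))
  · -- (02,12)
    exact Submodule.mem_sup_left (memS1 (Set.mem_union_left _ (Set.mem_union_left _ (Set.mem_union_left _ (Set.mem_union_left _ (Set.mem_union_right _ (wSet_mem _ _ _ _ hab hcd i j k l)))))))
  · -- (02,13)
    exact Submodule.mem_sup_left (memS2 (Set.mem_union_right _ (wSet_mem _ _ _ _ hab hcd i j k l)))
  · -- (02,23)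
    exact caseD h1' h2' i j k l
  · -- (03,01)
    exact Submodule.mem_sup_left (memS2 (Set.mem_union_left _ (Set.mem_union_left _ (Set.mem_union_left _ ⟨_, _, inBlock_eU 0 3 hab i j, rfl⟩))))
  · -- (03,02)
    exact Submodule.mem_sup_left (memS2 (Set.mem_union_left _ (Set.mem_union_left _ (Set.mem_union_left _ ⟨_, _, inBlock_eU 0 3 hab i j, rfl⟩))))
  · -- (03,03)
    exact Submodule.mem_sup_left (memS2 (Set.mem_union_left _ (Set.mem_union_left _ (Set.mem_union_left _ ⟨_, _, inBlock_eU 0 3 hab i j, rfl⟩))))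
  · -- (03,12)
    exact Submodule.mem_sup_left (memS2 (Set.mem_union_left _ (Set.mem_union_left _ (Set.mem_union_left _ ⟨_, _, inBlock_eU 0 3 hab i j, rfl⟩))))
  · -- (03,13)
    exact Submodule.mem_sup_left (memS2 (Set.mem_union_left _ (Set.mem_union_left _ (Set.mem_union_left _ ⟨_, _, inBlock_eU 0 3 hab i j, rfl⟩))))
  · -- (03,23)
    exact Submodule.mem_sup_left (memS2 (Set.mem_union_left _ (Set.mem_union_left _ (Set.mem_union_left _ ⟨_, _, inBlock_eU 0 3 hab i j, rfl⟩))))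
  · -- (12,01)
    apply swap_mem
    exact caseA h1' h2' k l i j
  · -- (12,02)
    apply swap_mem
    exact Submodule.mem_sup_left (memS1 (Set.mem_union_left _ (Set.mem_union_left _ (Set.mem_union_left _ (Set.mem_union_left _ (Set.mem_union_right _ (wSet_mem _ _ _ _ hcd hab k l i j)))))))
  · -- (12,03)
    apply swap_mem
    exact Submodule.mem_sup_left (memS2 (Set.mem_union_left _ (Set.mem_union_left _ (Set.mem_union_left _ ⟨_, _, inBlock_eU 0 3 hcd k l, rfl⟩))))
  · -- (12,12)
    exact Submodule.mem_sup_left (memS1 (Set.mem_union_left _ (Set.mem_union_left _ (Set.mem_union_left _ (Set.mem_union_left _ (Set.mem_union_left _ (Set.mem_union_left _ (Set.mem_union_right _ (wSet_mem _ _ _ _ hab hcd i j k l)))))))))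
  · -- (12,13)
    exact Submodule.mem_sup_left (memS1 (Set.mem_union_left _ (Set.mem_union_left _ (Set.mem_union_left _ (Set.mem_union_right _ (wSet_mem _ _ _ _ hab hcd i j k l))))))
  · -- (12,23)
    exact caseC h1' h2' i j k l
  · -- (13,01)
    apply swap_mem
    exact caseB h1' h2' k l i j
  · -- (13,02)
    apply swap_mem
    exact Submodule.mem_sup_left (memS2 (Set.mem_union_right _ (wSet_mem _ _ _ _ hcd hab k l i j)))
  · -- (13,03)
    apply swap_mem
    exact Submodule.mem_sup_left (memS2 (Set.mem_union_left _ (Set.mem_union_left _ (Set.mem_union_left _ ⟨_, _, inBlock_eU 0 3 hcd k l, rfl⟩))))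
  · -- (13,12)
    apply swap_mem
    exact Submodule.mem_sup_left (memS1 (Set.mem_union_left _ (Set.mem_union_left _ (Set.mem_union_left _ (Set.mem_union_right _ (wSet_mem _ _ _ _ hcd hab k l i j))))))
  · -- (13,13)
    exact Submodule.mem_sup_left (memS2 (Set.mem_union_left _ (Set.mem_union_right _ (wSet_mem _ _ _ _ hab hcd i j k l))))
  · -- (13,23)
    exact Submodule.mem_sup_left (memS1 (Set.mem_union_left _ (Set.mem_union_right _ (wSet_mem _ _ _ _ hab hcd i j k l))))
  · -- (23,01)
    apply swap_mem
    exact Submodule.mem_sup_left (memS1 (Set.mem_union_right _ (wSet_mem _ _ _ _ hcd hab k l i j)))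
  · -- (23,02)
    apply swap_mem
    exact caseD h1' h2' k l i j
  · -- (23,03)
    apply swap_mem
    exact Submodule.mem_sup_left (memS2 (Set.mem_union_left _ (Set.mem_union_left _ (Set.mem_union_left _ ⟨_, _, inBlock_eU 0 3 hcd k l, rfl⟩))))
  · -- (23,12)
    apply swap_mem
    exact caseC h1' h2' k l i j
  · -- (23,13)
    apply swap_mem
    exact Submodule.mem_sup_left (memS1 (Set.mem_union_left _ (Set.mem_union_right _ (wSet_mem _ _ _ _ hcd hab k l i j))))
  · -- (23,23)
    exact Submodule.mem_sup_left (memS1 (Set.mem_union_left _ (Set.mem_union_left _ (Set.mem_union_left _ (Set.mem_union_left _ (Set.mem_union_left _ (Set.mem_union_right _ (wSet_mem _ _ _ _ hab hcd i j k l))))))))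

end AuxBig
section AuxFinal
variable {n : Fin 4 → ℕ} {K : Type*} [Field K]

lemma top_sup (h1' : 0 < n 1) (h2' : 0 < n 2) :
    SpanS n K ⊔ Wsub n K h1' h2' = ⊤ := by
  rw [eq_top_iff, ← wedge_span_top]
  apply Submodule.span_le.mpr
  rintro w ⟨x, y, rfl⟩
  apply wedge_mem_P _ _ x y
  intro p q r s
  unfold eU'
  split
  · split
    · exact unitWedge_mem h1' h2' _ _ _ _ _ _ _ _ _ _
    · rw [wedge_zero_right]; exact Submodule.zero_mem _
  · rw [wedge_zero_left]; exact Submodule.zero_mem _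

/-- Row positions of the target units. -/
def pw1 (n : Fin 4 → ℕ) : WIdx n → BIdx n
  | Sum.inl (i, _) => ⟨0, i⟩
  | Sum.inr (Sum.inl (i, _)) => ⟨1, i⟩
  | Sum.inr (Sum.inr (i, _)) => ⟨0, i⟩

/-- Column positions of the target units. -/
def pw2 (n : Fin 4 → ℕ) : WIdx n → BIdx n
  | Sum.inl (_, k) => ⟨2, k⟩
  | Sum.inr (Sum.inl (_, k)) => ⟨3, k⟩
  | Sum.inr (Sum.inr (_, k)) => ⟨3, k⟩

lemma uW_coe (t : WIdx n) : ((uW n K t : UU n K) : Matrix (BIdx n) (BIdx n) K) =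
    Matrix.single (pw1 n t) (pw2 n t) 1 := by
  rcases t with ⟨i, k⟩ | ⟨i, k⟩ | ⟨i, k⟩ <;> rfl

lemma pw_ne {t t' : WIdx n} (h : t ≠ t') :
    ¬(pw1 n t = pw1 n t' ∧ pw2 n t = pw2 n t') := by
  rcases t with ⟨i, k⟩ | ⟨i, k⟩ | ⟨i, k⟩ <;> rcases t' with ⟨i', k'⟩ | ⟨i', k'⟩ | ⟨i', k'⟩ <;>
    rintro ⟨hh1, hh2⟩ <;>
    first
      | exact absurd hh1 (bidx_ne (by decide))
      | exact absurd hh2 (bidx_ne (by decide))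
      | (injection hh1 with _ hi; injection hh2 with _ hk;
         exact h (by rw [hi, hk]))

lemma W_inj (h1' : 0 < n 1) (h2' : 0 < n 2)
    (d2 : ↥(⋀[K]^2 (UU n K)) →ₗ[K] UU n K)
    (hd2 : ∀ x y : UU n K, d2 (wedge x y) = -⁅x, y⁆)
    (v : ↥(⋀[K]^2 (UU n K))) (hv : v ∈ Wsub n K h1' h2') (hdv : d2 v = 0) :
    v = 0 := by
  rw [Wsub] at hv
  obtain ⟨cf, hcf⟩ := (Submodule.mem_span_range_iff_exists_fun K).mp hv
  have hval : ∀ t : WIdx n, d2 (fW n K h1' h2' t) = - uW n K t := by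
    rintro (⟨i, k⟩ | ⟨i, k⟩ | ⟨i, k⟩)
    · show d2 (wedge (e01 i ⟨0, h1'⟩) (e12 ⟨0, h1'⟩ k)) = -(e02 i k : UU n K)
      rw [hd2, br_01_12, if_pos rfl]
    · show d2 (wedge (e12 i ⟨0, h2'⟩) (e23 ⟨0, h2'⟩ k)) = -(e13 i k : UU n K)
      rw [hd2, br_12_23, if_pos rfl]
    · show d2 (wedge (e01 i ⟨0, h1'⟩) (e13 ⟨0, h1'⟩ k)) = -(e03 i k : UU n K)
      rw [hd2, br_01_13, if_pos rfl]
  have h0 : ∑ t : WIdx n, cf t • uW n K t = 0 := by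
    have h := congrArg d2 hcf
    rw [map_sum, hdv] at h
    rw [Finset.sum_congr rfl (fun t _ => by
      rw [map_smul, hval, smul_neg] :
      ∀ t ∈ Finset.univ, d2 (cf t • fW n K h1' h2' t) = -(cf t • uW n K t))] at h
    rwa [Finset.sum_neg_distrib, neg_eq_zero] at h
  have h0' : ∑ t : WIdx n, cf t • ((uW n K t : UU n K) : Matrix (BIdx n) (BIdx n) K) =
      (0 : Matrix (BIdx n) (BIdx n) K) := by
    have := congrArg (fun u : UU n K => (u : Matrix (BIdx n) (BIdx n) K)) h0
    simpa only [AddSubmonoidClass.coe_finset_sum, uu_coe_smul, ZeroMemClass.coe_zero]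
      using this
  have hcf0 : ∀ t : WIdx n, cf t = 0 := by
    intro t0
    have hent := congrFun (congrFun h0' (pw1 n t0)) (pw2 n t0)
    rw [Matrix.sum_apply] at hent
    rw [Finset.sum_eq_single t0 (fun t _ ht => by
        rw [Matrix.smul_apply, uW_coe,
          Matrix.single_apply_of_ne _ _ _ _ _ (pw_ne ht), smul_zero])
      (by simp)] at hent
    rw [Matrix.smul_apply, uW_coe, Matrix.single_apply_same] at hent
    simpa using hent
  rw [← hcf]
  rw [Finset.sum_congr rfl (fun t _ => by rw [hcf0 t, zero_smul] :
    ∀ t ∈ Finset.univ, cf t • fW n K h1' h2' t = 0)]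
  simp

end AuxFinal
/-- The kernel of `d2 : Λ²𝔲 → 𝔲` (the linear map with `d2(x ∧ y) = −[x, y]`) equals the
`K`-span of `S1 ∪ S2 ∪ S3 ∪ S4 ∪ S5 ∪ S6`. -/
theorem stmt_12 (n : Fin 4 → ℕ) (h0 : 1 ≤ n 0) (h1 : 3 ≤ n 1) (h2 : 3 ≤ n 2)
    (h3 : 1 ≤ n 3) (K : Type*) [Field K] :
    ∀ d2 : ↥(⋀[K]^2 (UU n K)) →ₗ[K] UU n K,
      (∀ x y : UU n K, d2 (wedge x y) = -⁅x, y⁆) →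
      LinearMap.ker d2 =
        Submodule.span K (S1 n K ∪ S2 n K ∪ S3 n K ∪ S4 n K ∪ S5 n K ∪ S6 n K) := by
  intro d2 hd2
  have h1' : 0 < n 1 := by omega
  have h2' : 0 < n 2 := by omega
  apply le_antisymm
  · intro w hw
    have hwtop : w ∈ SpanS n K ⊔ Wsub n K h1' h2' := by
      rw [top_sup h1' h2']; exact Submodule.mem_top
    obtain ⟨s, hs, v, hv, rfl⟩ := Submodule.mem_sup.mp hwtop
    have hds : d2 s = 0 :=
      LinearMap.mem_ker.mp (Submodule.span_le.mpr (d2_vanish d2 hd2) hs)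
    have hdv : d2 v = 0 := by
      have h := LinearMap.mem_ker.mp hw
      rw [map_add, hds, zero_add] at h
      exact h
    rw [W_inj h1' h2' d2 hd2 v hv hdv, add_zero]
    exact hs
  · exact Submodule.span_le.mpr (d2_vanish d2 hd2)
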